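/- Nonnegativity of the output-deficiency-based synergy: for a joint distribution P of (S,Y,Z), CI_o(S;Y,Z) = min{ I(S;Y|Z) − δ_o^π(μ,κ), I(S;Z|Y) − δ_o^π(κ,μ) } ≥ 0. -/

import Mathlib

open Finset Real

section Defs
variable {α β γ : Type*} [Fintype α] [Fintype β] [Fintype γ]

/-- `p` is a probability distribution on a finite type. -/
def IsDist (p : α → ℝ) : Prop := (∀ a, 0 ≤ p a) ∧ ∑ a, p a = 1

/-- `k` is a channel (stochastic matrix): each row is a distribution. -/
def IsChannel (k : α → β → ℝ) : Prop := ∀ a, IsDist (k a)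

/-- Kullback–Leibler divergence (base 2) between distributions on a finite type. -/
noncomputable def klDiv2 (p q : α → ℝ) : ℝ := ∑ a, p a * Real.logb 2 (p a / q a)

/-- Channel composition: `(chComp lam mu) a c = ∑ b, lam b c * mu a b`. -/
def chComp (lam : β → γ → ℝ) (mu : α → β → ℝ) : α → γ → ℝ :=
  fun a c => ∑ b, lam b c * mu a b

/-- Conditional (weighted) KL divergence `D(k ∥ k' | pi)`. -/
noncomputable def condKL (pi : α → ℝ) (k k' : α → β → ℝ) : ℝ :=
  ∑ a, pi a * klDiv2 (k a) (k' a)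

/-- Weighted output deficiency `δ_o^π(μ,κ) = inf_λ D(κ ∥ λ∘μ | π)`. -/
noncomputable def defOut (pi : α → ℝ) (mu : α → γ → ℝ) (kap : α → β → ℝ) : ℝ :=
  sInf {d | ∃ lam : γ → β → ℝ, IsChannel lam ∧ d = condKL pi kap (chComp lam mu)}

/-- Risk of a fixed strategy `rho` used after observing through channel `nu`. -/
noncomputable def riskWith {S O A : Type*} [Fintype S] [Fintype O] [Fintype A]
    (pi : S → ℝ) (nu : S → O → ℝ) (rho : O → A → ℝ) (l : S → A → ℝ) : ℝ :=
  ∑ s, pi s * ∑ a, chComp rho nu s a * l s a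

/-- Optimal Bayes risk `R(π,ν,ℓ)`. -/
noncomputable def bayesRisk {S O A : Type*} [Fintype S] [Fintype O] [Fintype A]
    (pi : S → ℝ) (nu : S → O → ℝ) (l : S → A → ℝ) : ℝ :=
  sInf {r | ∃ rho : O → A → ℝ, IsChannel rho ∧ r = riskWith pi nu rho l}

/-- Total variation distance between distributions on a finite type. -/
noncomputable def tvDist (p q : α → ℝ) : ℝ := (∑ a, |p a - q a|) / 2

end Defs

section Joint
variable {S Y Z : Type*} [Fintype S] [Fintype Y] [Fintype Z]

noncomputable def margSY (P : S × Y × Z → ℝ) : S × Y → ℝ := fun p => ∑ z, P (p.1, p.2, z)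
noncomputable def margSZ (P : S × Y × Z → ℝ) : S × Z → ℝ := fun p => ∑ y, P (p.1, y, p.2)
noncomputable def margYZ (P : S × Y × Z → ℝ) : Y × Z → ℝ := fun p => ∑ s, P (s, p.1, p.2)
noncomputable def margS (P : S × Y × Z → ℝ) : S → ℝ := fun s => ∑ y, ∑ z, P (s, y, z)
noncomputable def margY (P : S × Y × Z → ℝ) : Y → ℝ := fun y => ∑ s, ∑ z, P (s, y, z)
noncomputable def margZ (P : S × Y × Z → ℝ) : Z → ℝ := fun z => ∑ s, ∑ y, P (s, y, z)

/-- Mutual information `I(S;Y)` (base 2) of the (S,Y)-marginal of `P`. -/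
noncomputable def miSY (P : S × Y × Z → ℝ) : ℝ :=
  ∑ s, ∑ y, margSY P (s, y) * Real.logb 2 (margSY P (s, y) / (margS P s * margY P y))

/-- Mutual information `I(S;Z)` (base 2) of the (S,Z)-marginal of `P`. -/
noncomputable def miSZ (P : S × Y × Z → ℝ) : ℝ :=
  ∑ s, ∑ z, margSZ P (s, z) * Real.logb 2 (margSZ P (s, z) / (margS P s * margZ P z))

/-- Conditional mutual information `I(S;Y|Z)` (base 2) under `P`. -/
noncomputable def condMI (P : S × Y × Z → ℝ) : ℝ :=
  ∑ s, ∑ y, ∑ z,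
    P (s, y, z) * Real.logb 2 (P (s, y, z) * margZ P z / (margSZ P (s, z) * margYZ P (y, z)))

/-- The feasible set `Δ_P`: joint distributions with the same (S,Y)- and (S,Z)-marginals as `P`. -/
def marginalPolytope (P : S × Y × Z → ℝ) : Set (S × Y × Z → ℝ) :=
  {Q | IsDist Q ∧ margSY Q = margSY P ∧ margSZ Q = margSZ P}

/-- Minimum-synergy unique information `UI(S;Y\Z) = inf_{Q ∈ Δ_P} I_Q(S;Y|Z)`. -/
noncomputable def UI (P : S × Y × Z → ℝ) : ℝ :=
  sInf (condMI '' marginalPolytope P)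

noncomputable def condYgivenS (P : S × Y × Z → ℝ) : S → Y → ℝ :=
  fun s y => margSY P (s, y) / margS P s
noncomputable def condZgivenS (P : S × Y × Z → ℝ) : S → Z → ℝ :=
  fun s z => margSZ P (s, z) / margS P s
noncomputable def condSgivenY (P : S × Y × Z → ℝ) : Y → S → ℝ :=
  fun y s => margSY P (s, y) / margY P y
noncomputable def condSgivenZ (P : S × Y × Z → ℝ) : Z → S → ℝ :=
  fun z s => margSZ P (s, z) / margZ P z

/-- Weighted input deficiency `δ_i^π(μ̄,κ̄) = inf_{λ̄} ∑_y π_Y(y) D(κ̄_y ∥ (μ̄∘λ̄)_y)`. -/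
noncomputable def defIn {Y' Z' S' : Type*} [Fintype Y'] [Fintype Z'] [Fintype S']
    (piY : Y' → ℝ) (mub : Z' → S' → ℝ) (kab : Y' → S' → ℝ) : ℝ :=
  sInf {d | ∃ lb : Y' → Z' → ℝ, IsChannel lb ∧
    d = ∑ y, piY y * klDiv2 (kab y) (chComp mub lb y)}

end Joint

section Gibbs
variable {ι : Type*} [Fintype ι]

lemma gibbs_log (p a : ι → ℝ) (hp : ∀ i, 0 ≤ p i) (ha : ∀ i, 0 ≤ a i)
    (hpa : ∀ i, 0 < p i → 0 < a i) (hsum : ∑ i, a i ≤ ∑ i, p i) :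
    0 ≤ ∑ i, p i * Real.log (p i / a i) := by
  have key : ∀ i, p i - a i ≤ p i * Real.log (p i / a i) := by
    intro i
    rcases eq_or_lt_of_le (hp i) with h | h
    · rw [← h]; simpa using ha i
    · have hai := hpa i h
      have h1 : Real.log (a i / p i) ≤ a i / p i - 1 :=
        Real.log_le_sub_one_of_pos (by positivity)
      have h2 : Real.log (p i / a i) = - Real.log (a i / p i) := by
        rw [Real.log_div h.ne' hai.ne', Real.log_div hai.ne' h.ne']; ring
      rw [h2]
      have h4 := mul_le_mul_of_nonneg_left h1 (le_of_lt h)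
      have h3 : p i * (a i / p i - 1) = a i - p i := by field_simp
      nlinarith
  calc (0:ℝ) ≤ ∑ i, p i - ∑ i, a i := by linarith
  _ = ∑ i, (p i - a i) := (Finset.sum_sub_distrib _ _).symm
  _ ≤ _ := Finset.sum_le_sum fun i _ => key i

lemma gibbs (p a : ι → ℝ) (hp : ∀ i, 0 ≤ p i) (ha : ∀ i, 0 ≤ a i)
    (hpa : ∀ i, 0 < p i → 0 < a i) (hsum : ∑ i, a i ≤ ∑ i, p i) :
    0 ≤ ∑ i, p i * Real.logb 2 (p i / a i) := by
  have h := gibbs_log p a hp ha hpa hsum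
  have heq : ∑ i, p i * Real.logb 2 (p i / a i)
      = (∑ i, p i * Real.log (p i / a i)) / Real.log 2 := by
    rw [Finset.sum_div]
    exact Finset.sum_congr rfl fun i _ => by rw [Real.logb]; ring
  rw [heq]
  exact div_nonneg h (Real.log_nonneg one_le_two)

end Gibbs

section CoreSec
variable {S Y Z : Type*} [Fintype S] [Fintype Y] [Fintype Z]

lemma sum_triple (f : S × Y × Z → ℝ) :
    ∑ x, f x = ∑ s, ∑ y, ∑ z, f (s, y, z) := by
  rw [Fintype.sum_prod_type]
  exact Finset.sum_congr rfl fun s _ => Fintype.sum_prod_type _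

lemma swap_z (f : S → Y → Z → ℝ) :
    ∑ s, ∑ y, ∑ z, f s y z = ∑ z, ∑ s, ∑ y, f s y z :=
  calc ∑ s, ∑ y, ∑ z, f s y z
      = ∑ s, ∑ z, ∑ y, f s y z := Finset.sum_congr rfl fun s _ => Finset.sum_comm
    _ = ∑ z, ∑ s, ∑ y, f s y z := Finset.sum_comm

lemma core [Nonempty Y] (P : S × Y × Z → ℝ) (hP : IsDist P) (hfull : ∀ s, 0 < margS P s) :
    defOut (margS P) (condZgivenS P) (condYgivenS P) ≤ condMI P := by
  obtain ⟨hP0, hP1⟩ := hP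
  have hSY0 : ∀ s y, 0 ≤ margSY P (s, y) := fun s y => Finset.sum_nonneg fun z _ => hP0 _
  have hSZ0 : ∀ s z, 0 ≤ margSZ P (s, z) := fun s z => Finset.sum_nonneg fun y _ => hP0 _
  have hYZ0 : ∀ y z, 0 ≤ margYZ P (y, z) := fun y z => Finset.sum_nonneg fun s _ => hP0 _
  have hPZ0 : ∀ z, 0 ≤ margZ P z := fun z =>
    Finset.sum_nonneg fun s _ => Finset.sum_nonneg fun y _ => hP0 _
  have hPZ_s : ∀ z, margZ P z = ∑ s, margSZ P (s, z) := fun z => rfl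
  have hPZ_y : ∀ z, margZ P z = ∑ y, margYZ P (y, z) := fun z => Finset.sum_comm
  have hSZzero : ∀ s z, margZ P z = 0 → margSZ P (s, z) = 0 := by
    intro s z hz
    exact (Finset.sum_eq_zero_iff_of_nonneg (fun s' _ => hSZ0 s' z)).1
      ((hPZ_s z).symm.trans hz) s (Finset.mem_univ s)
  -- positivity facts on the support of P
  have hpos : ∀ s y z, 0 < P (s, y, z) → 0 < margSY P (s, y) ∧ 0 < margSZ P (s, z) ∧
      0 < margYZ P (y, z) ∧ 0 < margZ P z ∧
      0 < ∑ z', margSZ P (s, z') * margYZ P (y, z') / margZ P z' := by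
    intro s y z h
    have h1 : 0 < margSY P (s, y) :=
      lt_of_lt_of_le h (Finset.single_le_sum (fun z' _ => hP0 (s, y, z')) (Finset.mem_univ z))
    have h2 : 0 < margSZ P (s, z) :=
      lt_of_lt_of_le h (Finset.single_le_sum (fun y' _ => hP0 (s, y', z)) (Finset.mem_univ y))
    have h3 : 0 < margYZ P (y, z) :=
      lt_of_lt_of_le h (Finset.single_le_sum (fun s' _ => hP0 (s', y, z)) (Finset.mem_univ s))
    have h4 : 0 < margZ P z := by
      rw [hPZ_s z]
      exact lt_of_lt_of_le h2 (Finset.single_le_sum (fun s' _ => hSZ0 s' z) (Finset.mem_univ s))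
    refine ⟨h1, h2, h3, h4, ?_⟩
    have hterm : 0 < margSZ P (s, z) * margYZ P (y, z) / margZ P z := by positivity
    exact lt_of_lt_of_le hterm (Finset.single_le_sum
      (fun z' _ => div_nonneg (mul_nonneg (hSZ0 s z') (hYZ0 y z')) (hPZ0 z')) (Finset.mem_univ z))
  -- nonnegativity of condMI
  have hcondMI0 : 0 ≤ condMI P := by
    have ha00 : ∀ x : S × Y × Z, 0 ≤ margSZ P (x.1, x.2.2) * margYZ P (x.2.1, x.2.2) / margZ P x.2.2 :=
      fun x => div_nonneg (mul_nonneg (hSZ0 _ _) (hYZ0 _ _)) (hPZ0 _)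
    have hMIeq : condMI P = ∑ x : S × Y × Z, P x * Real.logb 2
        (P x / (margSZ P (x.1, x.2.2) * margYZ P (x.2.1, x.2.2) / margZ P x.2.2)) := by
      rw [sum_triple]
      simp only [condMI]
      refine Finset.sum_congr rfl fun s _ => Finset.sum_congr rfl fun y _ =>
        Finset.sum_congr rfl fun z _ => ?_
      rcases eq_or_lt_of_le (hP0 (s, y, z)) with h0 | h0
      · rw [← h0]; simp
      · obtain ⟨h1, h2, h3, h4, h5⟩ := hpos s y z h0
        congr 1
        rw [div_div_eq_mul_div]
    rw [hMIeq]
    refine gibbs _ _ hP0 ha00 ?_ ?_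
    · intro x hx
      obtain ⟨h1, h2, h3, h4, h5⟩ := hpos x.1 x.2.1 x.2.2 hx
      exact div_pos (mul_pos h2 h3) h4
    · rw [sum_triple (fun x : S × Y × Z =>
        margSZ P (x.1, x.2.2) * margYZ P (x.2.1, x.2.2) / margZ P x.2.2)]
      rw [swap_z (fun s y z => margSZ P (s, z) * margYZ P (y, z) / margZ P z)]
      rw [hP1]
      have hzb : ∀ z, ∑ s, ∑ y, margSZ P (s, z) * margYZ P (y, z) / margZ P z ≤ margZ P z := by
        intro z
        rcases eq_or_lt_of_le (hPZ0 z) with h | h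
        · rw [← h]
          refine le_of_eq (Finset.sum_eq_zero fun s _ => Finset.sum_eq_zero fun y _ => ?_)
          rw [hSZzero s z h.symm]; simp
        · have hs : ∀ s, ∑ y, margSZ P (s, z) * margYZ P (y, z) / margZ P z = margSZ P (s, z) := by
            intro s
            have hy : ∀ y, margSZ P (s, z) * margYZ P (y, z) / margZ P z
                = margYZ P (y, z) * (margSZ P (s, z) / margZ P z) := fun y => by ring
            rw [Finset.sum_congr rfl fun y _ => hy y, ← Finset.sum_mul, ← hPZ_y z,
              mul_comm, div_mul_cancel₀ _ h.ne']
          rw [Finset.sum_congr rfl fun s _ => hs s]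
          exact le_of_eq (hPZ_s z).symm
      calc ∑ z, ∑ s, ∑ y, margSZ P (s, z) * margYZ P (y, z) / margZ P z
          ≤ ∑ z, margZ P z := Finset.sum_le_sum fun z _ => hzb z
        _ = 1 := by
            rw [show (1:ℝ) = ∑ x : S × Y × Z, P x from hP1.symm, sum_triple P,
              swap_z (fun s y z => P (s, y, z))]
            rfl
  -- the chosen channel
  set lam : Z → Y → ℝ := fun z y =>
    if 0 < margZ P z then margYZ P (y, z) / margZ P z else (Fintype.card Y : ℝ)⁻¹ with hlamdef
  have hlam : IsChannel lam := by
    intro z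
    constructor
    · intro y
      by_cases h : 0 < margZ P z
      · simp only [hlamdef, if_pos h]
        exact div_nonneg (hYZ0 y z) (hPZ0 z)
      · simp only [hlamdef, if_neg h]
        positivity
    · by_cases h : 0 < margZ P z
      · simp only [hlamdef, if_pos h]
        rw [← Finset.sum_div, ← hPZ_y z, div_self (ne_of_gt h)]
      · simp only [hlamdef, if_neg h]
        rw [Finset.sum_const, nsmul_eq_mul, Finset.card_univ, mul_inv_cancel₀]
        exact Nat.cast_ne_zero.2 Fintype.card_ne_zero
  have hr0 : ∀ s y, 0 ≤ ∑ z, margSZ P (s, z) * margYZ P (y, z) / margZ P z := fun s y =>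
    Finset.sum_nonneg fun z _ => div_nonneg (mul_nonneg (hSZ0 s z) (hYZ0 y z)) (hPZ0 z)
  have hchain : ∀ s y, ∑ z, lam z y * margSZ P (s, z)
      = ∑ z, margSZ P (s, z) * margYZ P (y, z) / margZ P z := by
    intro s y
    refine Finset.sum_congr rfl fun z _ => ?_
    by_cases h : 0 < margZ P z
    · simp only [hlamdef, if_pos h]; ring
    · have hz : margZ P z = 0 := le_antisymm (not_lt.1 h) (hPZ0 z)
      simp [hSZzero s z hz]
  have hq : ∀ s y, chComp lam (condZgivenS P) s y
      = (∑ z, margSZ P (s, z) * margYZ P (y, z) / margZ P z) / margS P s := by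
    intro s y
    show ∑ z, lam z y * condZgivenS P s z = _
    calc ∑ z, lam z y * condZgivenS P s z
        = ∑ z, lam z y * margSZ P (s, z) / margS P s := by
          refine Finset.sum_congr rfl fun z _ => ?_
          simp only [condZgivenS]; ring
      _ = (∑ z, lam z y * margSZ P (s, z)) / margS P s := by rw [Finset.sum_div]
      _ = _ := by rw [hchain]
  have hcondKL : condKL (margS P) (condYgivenS P) (chComp lam (condZgivenS P))
      = ∑ s, ∑ y, margSY P (s, y) * Real.logb 2
          (margSY P (s, y) / ∑ z, margSZ P (s, z) * margYZ P (y, z) / margZ P z) := by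
    simp only [condKL, klDiv2]
    refine Finset.sum_congr rfl fun s _ => ?_
    rw [Finset.mul_sum]
    refine Finset.sum_congr rfl fun y _ => ?_
    rw [hq s y]
    have hpis := (hfull s).ne'
    simp only [condYgivenS]
    have harg : margSY P (s, y) / margS P s
        / ((∑ z, margSZ P (s, z) * margYZ P (y, z) / margZ P z) / margS P s)
        = margSY P (s, y) / ∑ z, margSZ P (s, z) * margYZ P (y, z) / margZ P z := by
      rcases eq_or_ne (∑ z, margSZ P (s, z) * margYZ P (y, z) / margZ P z) 0 with hr | hr
      · simp [hr]
      · field_simp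
    rw [harg, ← mul_assoc]
    have hc : margS P s * (margSY P (s, y) / margS P s) = margSY P (s, y) := by
      field_simp
    rw [hc]
  -- the key inequality
  have hmain : (∑ s, ∑ y, margSY P (s, y) * Real.logb 2
      (margSY P (s, y) / ∑ z, margSZ P (s, z) * margYZ P (y, z) / margZ P z)) ≤ condMI P := by
    rw [← sub_nonneg]
    have ha30 : ∀ x : S × Y × Z, 0 ≤ margSZ P (x.1, x.2.2) * margYZ P (x.2.1, x.2.2) / margZ P x.2.2
        * (margSY P (x.1, x.2.1) / ∑ z', margSZ P (x.1, z') * margYZ P (x.2.1, z') / margZ P z') :=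
      fun x => mul_nonneg (div_nonneg (mul_nonneg (hSZ0 _ _) (hYZ0 _ _)) (hPZ0 _))
        (div_nonneg (hSY0 _ _) (hr0 _ _))
    have hexp : condMI P - (∑ s, ∑ y, margSY P (s, y) * Real.logb 2
        (margSY P (s, y) / ∑ z, margSZ P (s, z) * margYZ P (y, z) / margZ P z))
        = ∑ x : S × Y × Z, P x * Real.logb 2 (P x /
            (margSZ P (x.1, x.2.2) * margYZ P (x.2.1, x.2.2) / margZ P x.2.2
              * (margSY P (x.1, x.2.1) / ∑ z', margSZ P (x.1, z') * margYZ P (x.2.1, z') / margZ P z'))) := by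
      rw [sum_triple (fun x : S × Y × Z => P x * Real.logb 2 (P x /
            (margSZ P (x.1, x.2.2) * margYZ P (x.2.1, x.2.2) / margZ P x.2.2
              * (margSY P (x.1, x.2.1) / ∑ z', margSZ P (x.1, z') * margYZ P (x.2.1, z') / margZ P z'))))]
      have hmid : (∑ s, ∑ y, margSY P (s, y) * Real.logb 2
          (margSY P (s, y) / ∑ z, margSZ P (s, z) * margYZ P (y, z) / margZ P z))
          = ∑ s, ∑ y, ∑ z, P (s, y, z) * Real.logb 2
            (margSY P (s, y) / ∑ z', margSZ P (s, z') * margYZ P (y, z') / margZ P z') :=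
        Finset.sum_congr rfl fun s _ => Finset.sum_congr rfl fun y _ => Finset.sum_mul _ _ _
      rw [hmid]
      simp only [condMI]
      rw [← Finset.sum_sub_distrib]
      refine Finset.sum_congr rfl fun s _ => ?_
      rw [← Finset.sum_sub_distrib]
      refine Finset.sum_congr rfl fun y _ => ?_
      rw [← Finset.sum_sub_distrib]
      refine Finset.sum_congr rfl fun z _ => ?_
      rcases eq_or_lt_of_le (hP0 (s, y, z)) with h0 | h0
      · rw [← h0]; simp
      · obtain ⟨h1, h2, h3, h4, h5⟩ := hpos s y z h0
        rw [← mul_sub, ← Real.logb_div (by positivity) (by positivity)]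
        congr 2
        field_simp
    rw [hexp]
    refine gibbs _ _ hP0 ha30 ?_ ?_
    · intro x hx
      obtain ⟨h1, h2, h3, h4, h5⟩ := hpos x.1 x.2.1 x.2.2 hx
      exact mul_pos (div_pos (mul_pos h2 h3) h4) (div_pos h1 h5)
    · rw [sum_triple (fun x : S × Y × Z =>
          margSZ P (x.1, x.2.2) * margYZ P (x.2.1, x.2.2) / margZ P x.2.2
            * (margSY P (x.1, x.2.1) / ∑ z', margSZ P (x.1, z') * margYZ P (x.2.1, z') / margZ P z'))]
      rw [hP1]
      have hb : ∀ s y, ∑ z, margSZ P (s, z) * margYZ P (y, z) / margZ P z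
          * (margSY P (s, y) / ∑ z', margSZ P (s, z') * margYZ P (y, z') / margZ P z')
          ≤ margSY P (s, y) := by
        intro s y
        rw [← Finset.sum_mul]
        rcases eq_or_lt_of_le (hr0 s y) with h | h
        · rw [← h, zero_mul]; exact hSY0 s y
        · rw [mul_comm, div_mul_cancel₀ _ h.ne']
      calc ∑ s, ∑ y, ∑ z, margSZ P (s, z) * margYZ P (y, z) / margZ P z
            * (margSY P (s, y) / ∑ z', margSZ P (s, z') * margYZ P (y, z') / margZ P z')
          ≤ ∑ s, ∑ y, margSY P (s, y) :=
            Finset.sum_le_sum fun s _ => Finset.sum_le_sum fun y _ => hb s y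
        _ = 1 := by
            rw [show (1:ℝ) = ∑ x : S × Y × Z, P x from hP1.symm, sum_triple P]
            rfl
  -- conclude via the infimum
  unfold defOut
  by_cases hbdd : BddBelow {d | ∃ lam' : Z → Y → ℝ, IsChannel lam' ∧
      d = condKL (margS P) (condYgivenS P) (chComp lam' (condZgivenS P))}
  · refine le_trans (csInf_le hbdd ⟨lam, hlam, rfl⟩) ?_
    rw [hcondKL]
    exact hmain
  · rw [Real.sInf_of_not_bddBelow hbdd]
    exact hcondMI0

end CoreSec
section SwapSec
variable {S Y Z : Type*} [Fintype S] [Fintype Y] [Fintype Z]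

lemma margS_swap (P : S × Y × Z → ℝ) :
    margS (fun p : S × Z × Y => P (p.1, p.2.2, p.2.1)) = margS P := by
  funext s
  exact Finset.sum_comm

lemma isDist_swap (P : S × Y × Z → ℝ) (hP : IsDist P) :
    IsDist (fun p : S × Z × Y => P (p.1, p.2.2, p.2.1)) := by
  refine ⟨fun p => hP.1 _, ?_⟩
  have h2 := hP.2
  rw [sum_triple P] at h2
  calc ∑ p : S × Z × Y, P (p.1, p.2.2, p.2.1)
      = ∑ s, ∑ z, ∑ y, P (s, y, z) := sum_triple _
    _ = ∑ s, ∑ y, ∑ z, P (s, y, z) := Finset.sum_congr rfl fun s _ => Finset.sum_comm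
    _ = 1 := h2

lemma condZ_swap (P : S × Y × Z → ℝ) :
    condZgivenS (fun p : S × Z × Y => P (p.1, p.2.2, p.2.1)) = condYgivenS P := by
  funext s y
  simp only [condZgivenS, condYgivenS, margS_swap]
  rfl

lemma condY_swap (P : S × Y × Z → ℝ) :
    condYgivenS (fun p : S × Z × Y => P (p.1, p.2.2, p.2.1)) = condZgivenS P := by
  funext s z
  simp only [condZgivenS, condYgivenS, margS_swap]
  rfl

end SwapSec

/-- nonnegativity of the output-deficiency-based synergy `CI_o`. -/
theorem CIo_nonneg
    {S Y Z : Type*} [Fintype S] [Fintype Y] [Fintype Z]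
    [Nonempty S] [Nonempty Y] [Nonempty Z]
    (P : S × Y × Z → ℝ) (hP : IsDist P) (hfull : ∀ s, 0 < margS P s) :
    0 ≤ min (condMI P - defOut (margS P) (condZgivenS P) (condYgivenS P))
            (condMI (fun p : S × Z × Y => P (p.1, p.2.2, p.2.1)) -
              defOut (margS P) (condYgivenS P) (condZgivenS P)) := by
  have h1 := core P hP hfull
  have h2 := core (fun p : S × Z × Y => P (p.1, p.2.2, p.2.1)) (isDist_swap P hP)
    (fun s => by rw [margS_swap]; exact hfull s)
  rw [margS_swap, condZ_swap, condY_swap] at h2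
  rw [le_min_iff]
  exact ⟨by linarith, by linarith⟩
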